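/- Let T be a density operator on C^d and C_T(j,k) = (1/d)U_j V_k T V_k* U_j* the associated covariant phase space observable. Then the linear span of {C_T(j,k) : j,k ∈ Z_d} equals all linear operators on C^d (i.e., C_T is informationally complete) if and only if tr[T U_x V_y] ≠ 0 for all x, y ∈ Z_d. -/

import Mathlib

open Matrix Kronecker Finset
open scoped ComplexOrder

/-- ω = e^{2πi/d} -/
noncomputable def ww (d : ℕ) : ℂ := Complex.exp (2 * Real.pi * Complex.I / d)

/-- shift unitary U_x φ_k = φ_{k+x} -/
noncomputable def Um (d : ℕ) (x : ZMod d) : Matrix (ZMod d) (ZMod d) ℂ :=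
  fun i j => if i = j + x then 1 else 0

/-- modulation unitary V_y φ_k = ω^{yk} φ_k -/
noncomputable def Vm (d : ℕ) (y : ZMod d) : Matrix (ZMod d) (ZMod d) ℂ :=
  Matrix.diagonal fun i => ww d ^ (y * i).val

/-- finite Fourier transform F φ_k = (1/√d) Σ_h ω^{-hk} φ_h -/
noncomputable def Fm (d : ℕ) : Matrix (ZMod d) (ZMod d) ℂ :=
  fun i j => (1 / Real.sqrt d : ℂ) * (ww d)⁻¹ ^ (i * j).val

/-- the standard orthonormal basis vector φ_k -/
noncomputable def phiV (d : ℕ) (k : ZMod d) : ZMod d → ℂ := Pi.single k 1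

/-- ψ_k = F* φ_k -/
noncomputable def psiV (d : ℕ) [NeZero d] (k : ZMod d) : ZMod d → ℂ :=
  (Fm d)ᴴ.mulVec (phiV d k)

/-- A(j) = |φ_j⟩⟨φ_j| -/
noncomputable def Aob (d : ℕ) (j : ZMod d) : Matrix (ZMod d) (ZMod d) ℂ :=
  vecMulVec (phiV d j) (star (phiV d j))

/-- B(k) = |ψ_k⟩⟨ψ_k| -/
noncomputable def Bob (d : ℕ) [NeZero d] (k : ZMod d) : Matrix (ZMod d) (ZMod d) ℂ :=
  vecMulVec (psiV d k) (star (psiV d k))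


/-! ### Auxiliary development -/

set_option linter.unusedSectionVars false

section chiSec
variable (d : ℕ) [NeZero d]

noncomputable def chi (n : ZMod d) : ℂ := ww d ^ n.val

lemma hprim : IsPrimitiveRoot (ww d) d := Complex.isPrimitiveRoot_exp d (NeZero.ne d)

lemma ww_pow_d : (ww d) ^ d = 1 := (hprim d).pow_eq_one

lemma chi_zero : chi d 0 = 1 := by
  simp [chi, ZMod.val_zero]

lemma chi_add (a b : ZMod d) : chi d (a + b) = chi d a * chi d b := by
  rw [chi, chi, chi, ZMod.val_add, ← pow_add]
  conv_rhs => rw [pow_eq_pow_mod (a.val + b.val) (ww_pow_d d)]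

lemma chi_ne_zero (n : ZMod d) : chi d n ≠ 0 :=
  pow_ne_zero _ (Complex.exp_ne_zero _)

lemma chi_mul_chi_neg (n : ZMod d) : chi d n * chi d (-n) = 1 := by
  rw [← chi_add, add_neg_cancel, chi_zero]

lemma star_ww : star (ww d) = (ww d)⁻¹ := by
  rw [ww, Complex.star_def, ← Complex.exp_conj, ← Complex.exp_neg]
  congr 1
  simp [map_div₀, Complex.conj_I, map_ofNat]
  ring

lemma chi_star (n : ZMod d) : star (chi d n) = chi d (-n) := by
  have h1 : star (chi d n) = (chi d n)⁻¹ := by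
    rw [chi, star_pow, star_ww, inv_pow]
  exact h1.trans (inv_eq_of_mul_eq_one_right (chi_mul_chi_neg d n))

lemma chi_mul_eq (j a : ZMod d) : chi d (j * a) = (ww d ^ a.val) ^ j.val := by
  rw [chi, ZMod.val_mul, ← pow_eq_pow_mod _ (ww_pow_d d), ← pow_mul, mul_comm j.val]

lemma chi_sum (a : ZMod d) : ∑ j : ZMod d, chi d (j * a) = if a = 0 then (d : ℂ) else 0 := by
  split_ifs with h
  · subst h; simp [chi_zero, ZMod.card]
  · simp only [chi_mul_eq]
    have hre : ∑ j : ZMod d, (ww d ^ a.val) ^ j.val = ∑ n ∈ range d, (ww d ^ a.val) ^ n := by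
      refine Finset.sum_nbij' (fun j => j.val) (fun n => (n : ZMod d)) ?_ ?_ ?_ ?_ ?_
      · intro j _; exact mem_range.mpr (ZMod.val_lt j)
      · intros; exact mem_univ _
      · intro j _; exact ZMod.natCast_rightInverse j
      · intro n hn; exact ZMod.val_natCast_of_lt (mem_range.mp hn)
      · intro j _; rfl
    rw [hre]
    have hζ1 : ww d ^ a.val ≠ 1 := by
      apply (hprim d).pow_ne_one_of_pos_of_lt
      · exact (fun hh => h (by rwa [← ZMod.val_eq_zero]))
      · exact ZMod.val_lt a
    rw [geom_sum_eq hζ1, ← pow_mul, mul_comm, pow_mul, ww_pow_d, one_pow, sub_self, zero_div]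

end chiSec

section weyl
variable (d : ℕ) [NeZero d]

noncomputable def Dm (q : ZMod d × ZMod d) : Matrix (ZMod d) (ZMod d) ℂ :=
  Um d q.1 * Vm d q.2

lemma Vm_eq_diagonal (y : ZMod d) : Vm d y = Matrix.diagonal fun i => chi d (y * i) := rfl

lemma Dm_apply (q : ZMod d × ZMod d) (i j : ZMod d) :
    Dm d q i j = if i = j + q.1 then chi d (q.2 * j) else 0 := by
  rw [Dm, Vm_eq_diagonal, Matrix.mul_diagonal]
  simp [Um, ite_mul]

lemma Dm_mul (p q : ZMod d × ZMod d) :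
    Dm d p * Dm d q = chi d (p.2 * q.1) • Dm d (p + q) := by
  ext i j
  simp only [Matrix.mul_apply, Matrix.smul_apply, Dm_apply, smul_eq_mul, Prod.fst_add, Prod.snd_add]
  rw [Finset.sum_eq_single_of_mem (j + q.1) (Finset.mem_univ _)
    (fun b _ hb => by rw [if_neg hb, mul_zero])]
  rw [if_pos rfl]
  by_cases h : i = j + q.1 + p.1
  · rw [if_pos h, if_pos (by rw [h]; ring), ← chi_add, ← chi_add]
    congr 1
    ring
  · rw [if_neg h, if_neg (fun hh : i = j + (p.1 + q.1) => h (by rw [hh]; ring)), zero_mul, mul_zero]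

lemma Dm_conjT (p : ZMod d × ZMod d) :
    (Dm d p)ᴴ = chi d (p.1 * p.2) • Dm d (-p) := by
  ext i j
  simp only [Matrix.conjTranspose_apply, Dm_apply, Matrix.smul_apply, smul_eq_mul, Prod.fst_neg,
    Prod.snd_neg]
  by_cases h : j = i + p.1
  · rw [if_pos h, if_pos (by rw [h]; ring), chi_star, ← chi_add]
    subst h
    congr 1
    ring
  · rw [if_neg h, if_neg (fun hh : i = j + -p.1 => h (by rw [hh]; ring)), star_zero, mul_zero]

lemma Dm_conj_Dm (p q : ZMod d × ZMod d) :
    Dm d p * Dm d q * (Dm d p)ᴴ = chi d (p.2 * q.1 - p.1 * q.2) • Dm d q := by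
  rw [Dm_mul, Matrix.smul_mul, Dm_conjT, Matrix.mul_smul, Dm_mul, smul_smul, smul_smul]
  have hpq : p + q + -p = q := by abel
  rw [hpq]
  congr 1
  rw [← chi_add, ← chi_add]
  congr 1
  simp only [Prod.fst_add, Prod.snd_add, Prod.fst_neg, Prod.snd_neg]
  ring

end weyl

section basisSec
variable (d : ℕ) [NeZero d]

lemma Dm_trace (p : ZMod d × ZMod d) :
    (Dm d p).trace = if p = 0 then (d : ℂ) else 0 := by
  rw [Matrix.trace]
  simp only [Matrix.diag, Dm_apply]
  by_cases h1 : p.1 = 0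
  · have : ∀ i : ZMod d, (if i = i + p.1 then chi d (p.2 * i) else 0) = chi d (i * p.2) := by
      intro i; rw [if_pos (by rw [h1, add_zero]), mul_comm]
    rw [Finset.sum_congr rfl (fun i _ => this i), chi_sum]
    by_cases h2 : p.2 = 0
    · rw [if_pos h2, if_pos (Prod.ext h1 h2)]
    · rw [if_neg h2, if_neg (fun hh => h2 (by simp [hh]))]
  · have : ∀ i : ZMod d, (if i = i + p.1 then chi d (p.2 * i) else 0) = 0 := by
      intro i; rw [if_neg (fun hh => h1 (by rwa [left_eq_add] at hh))]
    rw [Finset.sum_congr rfl (fun i _ => this i), Finset.sum_const, smul_zero,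
      if_neg (fun hh => h1 (by simp [hh]))]

lemma trace_pair (q q' : ZMod d × ZMod d) :
    ((Dm d q)ᴴ * Dm d q').trace = if q' = q then (d : ℂ) else 0 := by
  rw [Dm_conjT, Matrix.smul_mul, Dm_mul, smul_smul, Matrix.trace_smul, Dm_trace, smul_eq_mul]
  by_cases h : q' = q
  · subst h
    rw [if_pos rfl, if_pos (neg_add_cancel q'), Prod.snd_neg, ← chi_add,
      show q'.1 * q'.2 + -q'.2 * q'.1 = 0 from by ring, chi_zero, one_mul]
  · rw [if_neg h, if_neg (fun hh : -q + q' = 0 => h (by rwa [neg_add_eq_zero, eq_comm] at hh)),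
      mul_zero]

/-- the linear functional `A ↦ tr(Dm qᴴ A)` -/
noncomputable def psiL (q : ZMod d × ZMod d) : Matrix (ZMod d) (ZMod d) ℂ →ₗ[ℂ] ℂ where
  toFun A := ((Dm d q)ᴴ * A).trace
  map_add' A B := by rw [Matrix.mul_add, Matrix.trace_add]
  map_smul' c A := by rw [Matrix.mul_smul, Matrix.trace_smul, smul_eq_mul,
    RingHom.id_apply, smul_eq_mul]

lemma psiL_apply (q : ZMod d × ZMod d) (A : Matrix (ZMod d) (ZMod d) ℂ) :
    psiL d q A = ((Dm d q)ᴴ * A).trace := rfl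

lemma dne : (d : ℂ) ≠ 0 := by
  exact_mod_cast Nat.cast_ne_zero.mpr (NeZero.ne d)

lemma Dm_li : LinearIndependent ℂ (Dm d) := by
  rw [Fintype.linearIndependent_iff]
  intro g hg q
  have h := congrArg (psiL d q) hg
  rw [map_sum, map_zero] at h
  simp only [LinearMap.map_smul, psiL_apply, smul_eq_mul, trace_pair] at h
  rw [Finset.sum_congr rfl (fun p _ => by rw [mul_ite, mul_zero]), Finset.sum_ite_eq' _ q,
    if_pos (Finset.mem_univ q)] at h
  exact (mul_eq_zero.mp h).resolve_right (dne d)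

noncomputable def DmBasis : Module.Basis (ZMod d × ZMod d) ℂ (Matrix (ZMod d) (ZMod d) ℂ) :=
  basisOfLinearIndependentOfCardEqFinrank (Dm_li d)
    (by simp [Module.finrank_matrix, ZMod.card, Fintype.card_prod])

lemma DmBasis_coe : ⇑(DmBasis d) = Dm d :=
  coe_basisOfLinearIndependentOfCardEqFinrank _ _

end basisSec

section mainSec
variable (d : ℕ) [NeZero d] (T : Matrix (ZMod d) (ZMod d) ℂ)

noncomputable def cc (q : ZMod d × ZMod d) : ℂ := (DmBasis d).repr T q

lemma T_expand : T = ∑ q : ZMod d × ZMod d, cc d T q • Dm d q := by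
  conv_lhs => rw [← (DmBasis d).sum_repr T]
  simp only [cc, DmBasis_coe]

lemma cc_eq (q : ZMod d × ZMod d) : (d : ℂ) * cc d T q = ((Dm d q)ᴴ * T).trace := by
  conv_rhs => rw [← psiL_apply, T_expand d T]
  rw [map_sum]
  simp only [LinearMap.map_smul, psiL_apply, smul_eq_mul, trace_pair]
  rw [Finset.sum_congr rfl (fun p _ => by rw [mul_ite, mul_zero]), Finset.sum_ite_eq' _ q,
    if_pos (Finset.mem_univ q), mul_comm]

lemma conj_expand (p : ZMod d × ZMod d) :
    Dm d p * T * (Dm d p)ᴴ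
      = ∑ q : ZMod d × ZMod d, (cc d T q * chi d (p.2 * q.1 - p.1 * q.2)) • Dm d q := by
  conv_lhs => rw [T_expand d T]
  rw [Matrix.mul_sum, Matrix.sum_mul]
  refine Finset.sum_congr rfl fun q _ => ?_
  rw [Matrix.mul_smul, Matrix.smul_mul, Dm_conj_Dm, smul_smul]

lemma char_orth (q q' : ZMod d × ZMod d) :
    (∑ p : ZMod d × ZMod d, chi d (p.1 * q.2 - p.2 * q.1) * chi d (p.2 * q'.1 - p.1 * q'.2))
      = if q' = q then (d : ℂ) * d else 0 := by
  have h1 : ∀ p : ZMod d × ZMod d,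
      chi d (p.1 * q.2 - p.2 * q.1) * chi d (p.2 * q'.1 - p.1 * q'.2)
        = chi d (p.1 * (q.2 - q'.2)) * chi d (p.2 * (q'.1 - q.1)) := by
    intro p; rw [← chi_add, ← chi_add]; congr 1; ring
  rw [Finset.sum_congr rfl (fun p _ => h1 p), Fintype.sum_prod_type]
  dsimp only
  rw [← Finset.sum_mul_sum, chi_sum, chi_sum]
  by_cases h2 : q.2 - q'.2 = 0
  · by_cases h3 : q'.1 - q.1 = 0
    · rw [if_pos h2, if_pos h3, if_pos]
      exact Prod.ext (by rw [← sub_eq_zero]; exact h3)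
        (by rw [← sub_eq_zero, ← neg_sub q.2 q'.2, h2, neg_zero])
    · rw [if_pos h2, if_neg h3, mul_zero,
        if_neg (fun hh => h3 (by rw [hh, sub_self]))]
  · rw [if_neg h2, zero_mul, if_neg (fun hh => h2 (by rw [hh, sub_self]))]

lemma inversion (q : ZMod d × ZMod d) :
    (∑ p : ZMod d × ZMod d, chi d (p.1 * q.2 - p.2 * q.1) • (Dm d p * T * (Dm d p)ᴴ))
      = ((d : ℂ) * d * cc d T q) • Dm d q := by
  have step : ∀ p : ZMod d × ZMod d,
      chi d (p.1 * q.2 - p.2 * q.1) • (Dm d p * T * (Dm d p)ᴴ)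
        = ∑ q' : ZMod d × ZMod d,
            (chi d (p.1 * q.2 - p.2 * q.1) * (cc d T q' * chi d (p.2 * q'.1 - p.1 * q'.2)))
              • Dm d q' := by
    intro p
    rw [conj_expand, Finset.smul_sum]
    exact Finset.sum_congr rfl fun q' _ => by rw [smul_smul]
  rw [Finset.sum_congr rfl (fun p _ => step p), Finset.sum_comm]
  have col : ∀ q' : ZMod d × ZMod d,
      (∑ p : ZMod d × ZMod d,
        (chi d (p.1 * q.2 - p.2 * q.1) * (cc d T q' * chi d (p.2 * q'.1 - p.1 * q'.2)))
          • Dm d q')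
        = (cc d T q' * if q' = q then (d : ℂ) * d else 0) • Dm d q' := by
    intro q'
    rw [← Finset.sum_smul, ← char_orth d q q']
    congr 1
    rw [Finset.mul_sum]
    exact Finset.sum_congr rfl fun p _ => by ring
  rw [Finset.sum_congr rfl (fun q' _ => col q')]
  rw [Finset.sum_congr rfl (fun q' _ => by rw [mul_ite, mul_zero, ite_smul, zero_smul]),
    Finset.sum_ite_eq' _ q, if_pos (Finset.mem_univ q)]
  congr 1
  ring

end mainSec

theorem informational_completeness_criterion (d : ℕ) (hd : 2 ≤ d) [NeZero d]
    (T : Matrix (ZMod d) (ZMod d) ℂ) (hT : T.PosSemidef) (htr : T.trace = 1) :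
    Submodule.span ℂ (Set.range fun p : ZMod d × ZMod d =>
        (1 / d : ℂ) • (Um d p.1 * Vm d p.2 * T * (Vm d p.2)ᴴ * (Um d p.1)ᴴ)) = ⊤ ↔
      ∀ x y : ZMod d, Matrix.trace (T * Um d x * Vm d y) ≠ 0 := by
  have hgen : ∀ p : ZMod d × ZMod d,
      Um d p.1 * Vm d p.2 * T * (Vm d p.2)ᴴ * (Um d p.1)ᴴ = Dm d p * T * (Dm d p)ᴴ := by
    intro p
    rw [Matrix.mul_assoc (Um d p.1 * Vm d p.2 * T) (Vm d p.2)ᴴ (Um d p.1)ᴴ,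
      ← Matrix.conjTranspose_mul]
    rfl
  have htr' : ∀ q : ZMod d × ZMod d,
      ((Dm d q)ᴴ * T).trace = star ((T * Um d q.1 * Vm d q.2).trace) := by
    intro q
    have h1 : (Dm d q)ᴴ * T = (Tᴴ * Dm d q)ᴴ := by
      rw [Matrix.conjTranspose_mul, Matrix.conjTranspose_conjTranspose]
    rw [h1, Matrix.trace_conjTranspose, hT.1.eq]
    congr 1
    rw [Matrix.mul_assoc]
    rfl
  set S := Submodule.span ℂ (Set.range fun p : ZMod d × ZMod d =>
      (1 / d : ℂ) • (Um d p.1 * Vm d p.2 * T * (Vm d p.2)ᴴ * (Um d p.1)ᴴ)) with hS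
  constructor
  · intro hspan x y hzero
    have hc0 : (d : ℂ) * cc d T (x, y) = 0 := by
      rw [cc_eq, htr']
      dsimp only
      rw [hzero, star_zero]
    have hc0' : cc d T (x, y) = 0 := (mul_eq_zero.mp hc0).resolve_left (dne d)
    have hker : S ≤ LinearMap.ker (psiL d (x, y)) := by
      rw [hS]
      apply Submodule.span_le.mpr
      rintro A ⟨p, rfl⟩
      simp only [SetLike.mem_coe, LinearMap.mem_ker]
      rw [hgen p, LinearMap.map_smul, conj_expand, map_sum]
      simp only [LinearMap.map_smul, psiL_apply, trace_pair, smul_eq_mul]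
      rw [Finset.sum_congr rfl (fun q' _ => by rw [mul_ite, mul_zero]),
        Finset.sum_ite_eq' _ (x, y), if_pos (Finset.mem_univ _), hc0']
      simp
    have hmem : Dm d (x, y) ∈ S := hspan ▸ Submodule.mem_top
    have hval := hker hmem
    rw [LinearMap.mem_ker, psiL_apply, trace_pair, if_pos rfl] at hval
    exact dne d hval
  · intro hne
    have hDq : ∀ q : ZMod d × ZMod d, Dm d q ∈ S := by
      intro q
      have hcne : (d : ℂ) * cc d T q ≠ 0 := by
        rw [cc_eq, htr']
        exact star_ne_zero.mpr (hne q.1 q.2)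
      have hcne' : cc d T q ≠ 0 := fun h => hcne (by rw [h, mul_zero])
      have hmem : ((d : ℂ) * d * cc d T q) • Dm d q ∈ S := by
        rw [← inversion]
        apply Submodule.sum_mem
        intro p _
        apply Submodule.smul_mem
        have hd : Dm d p * T * (Dm d p)ᴴ
            = (d : ℂ) • ((1 / d : ℂ) • (Um d p.1 * Vm d p.2 * T * (Vm d p.2)ᴴ * (Um d p.1)ᴴ)) := by
          rw [hgen p, smul_smul, mul_one_div, div_self (dne d), one_smul]
        rw [hd]
        exact Submodule.smul_mem _ _ (Submodule.subset_span ⟨p, rfl⟩)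
      have hsm := Submodule.smul_mem S (((d : ℂ) * d * cc d T q)⁻¹) hmem
      rwa [smul_smul,
        inv_mul_cancel₀ (mul_ne_zero (mul_ne_zero (dne d) (dne d)) hcne'), one_smul] at hsm
    have htop : (⊤ : Submodule ℂ (Matrix (ZMod d) (ZMod d) ℂ))
        = Submodule.span ℂ (Set.range (Dm d)) := by
      rw [← (DmBasis d).span_eq, DmBasis_coe]
    refine le_antisymm le_top ?_
    rw [htop]
    exact Submodule.span_le.mpr (by rintro A ⟨q, rfl⟩; exact hDq q)
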